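/- Let S > 1, L ≥ S, Ω = {ω_1,...,ω_S} ⊂ 𝕋 distinct, Φ_L(Ω) the (L+1)×S Vandermonde matrix with unit-circle nodes e^{-2πiω_j}, U an orthonormal basis matrix for its column space, and U₀, U₁ the first-L-rows and last-L-rows submatrices of U. Then min(σ_S(U₀)², σ_S(U₁)²) ≥ 4^{-S}. -/

import Mathlib

open scoped Matrix

/-- The smallest singular value of a complex matrix, defined as the infimum of
`‖A v‖₂` over unit vectors `v` (Euclidean norms). -/
noncomputable def sigmaMin {m n : ℕ} (A : Matrix (Fin m) (Fin n) ℂ) : ℝ :=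
  sInf {r : ℝ | ∃ v : Fin n → ℂ, (∑ j, ‖v j‖ ^ 2) = 1 ∧
    r = Real.sqrt (∑ i, ‖A.mulVec v i‖ ^ 2)}

section Aux
open Polynomial Finset

lemma coeffBound' {S : ℕ} (u : Fin S → ℂ) (hu : ∀ j, ‖u j‖ = 1) {k : ℕ} (hk : k ≤ S) :
    ‖(∏ j, (X - C (u j))).coeff k‖ ≤ (S.choose k : ℝ) := by
  have hcard : Multiset.card (Finset.univ.val.map u) = S := by simp
  have hprod : (∏ j, (X - C (u j))) = ((Finset.univ.val.map u).map fun t => X - C t).prod := by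
    rw [Multiset.map_map]; rfl
  rw [hprod, Multiset.prod_X_sub_C_coeff _ (by rw [hcard]; exact hk), hcard]
  rw [norm_mul, norm_pow, norm_neg, norm_one, one_pow, one_mul]
  unfold Multiset.esymm
  refine le_trans (norm_multiset_sum_le _) ?_
  rw [Multiset.map_map]
  have hb : ∀ x ∈ Multiset.map ((fun x => ‖x‖) ∘ Multiset.prod)
      ((Finset.univ.val.map u).powersetCard (S - k)), x ≤ 1 := by
    intro x hx
    obtain ⟨t, ht, rfl⟩ := Multiset.mem_map.mp hx
    rw [Multiset.mem_powersetCard] at ht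
    simp only [Function.comp_apply]
    rw [show ‖t.prod‖ = normHom t.prod from rfl, map_multiset_prod, Multiset.prod_eq_one]
    intro a ha
    rw [Multiset.mem_map] at ha
    obtain ⟨b, hb, rfl⟩ := ha
    have := Multiset.mem_of_le ht.1 hb
    obtain ⟨j, _, rfl⟩ := Multiset.mem_map.mp this
    exact hu j
  calc (Multiset.map ((fun x => ‖x‖) ∘ Multiset.prod)
      ((Finset.univ.val.map u).powersetCard (S - k))).sum
      ≤ (Multiset.card (Multiset.map ((fun x => ‖x‖) ∘ Multiset.prod)
        ((Finset.univ.val.map u).powersetCard (S - k)))) • (1:ℝ) :=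
        Multiset.sum_le_card_nsmul _ _ hb
    _ = (S.choose (S - k) : ℝ) := by
        rw [Multiset.card_map, Multiset.card_powersetCard, hcard]; simp
    _ = (S.choose k : ℝ) := by rw [Nat.choose_symm hk]

lemma rangeSplit' (S : ℕ) : Finset.range (S + 1) = insert 0 (Finset.Icc 1 S) := by
  ext x; simp [Nat.lt_succ_iff]; omega

lemma keyIneq' (S : ℕ) (u c : Fin S → ℂ) (hu : ∀ j, ‖u j‖ = 1) :
    ‖∑ j, c j * u j ^ 0‖ ^ 2 ≤ ((4:ℝ) ^ S - 1) * ∑ k ∈ Finset.Icc 1 S, ‖∑ j, c j * u j ^ k‖ ^ 2 := by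
  set p : Polynomial ℂ := ∏ j, (X - C (u j)) with hp
  set f : ℕ → ℂ := fun k => ∑ j, c j * u j ^ k with hf
  have hdeg : p.natDegree = S := by
    rw [hp, natDegree_prod _ _ fun j _ => X_sub_C_ne_zero _]
    simp [natDegree_X_sub_C]
  have heval : ∀ j, p.eval (u j) = 0 := by
    intro j
    rw [hp, eval_prod]
    exact Finset.prod_eq_zero (Finset.mem_univ j) (by simp)
  have hzero : ∑ k ∈ Finset.range (S + 1), p.coeff k * f k = 0 := by
    have h1 : ∀ j, ∑ k ∈ Finset.range (S + 1), p.coeff k * (c j * u j ^ k)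
        = c j * p.eval (u j) := by
      intro j
      rw [eval_eq_sum_range, hdeg, Finset.mul_sum]
      congr 1; ext k; ring
    calc ∑ k ∈ Finset.range (S + 1), p.coeff k * f k
        = ∑ j, ∑ k ∈ Finset.range (S + 1), p.coeff k * (c j * u j ^ k) := by
          rw [Finset.sum_comm]
          refine Finset.sum_congr rfl fun k _ => ?_
          rw [hf, Finset.mul_sum]
      _ = ∑ j, c j * p.eval (u j) := Finset.sum_congr rfl fun j _ => h1 j
      _ = 0 := by simp [heval]
  have hc0 : ‖p.coeff 0‖ = 1 := by
    rw [coeff_zero_eq_eval_zero, hp, eval_prod, norm_prod, Finset.prod_eq_one]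
    intro j _
    simp [hu j]
  have hsplit : p.coeff 0 * f 0 = - ∑ k ∈ Finset.Icc 1 S, p.coeff k * f k := by
    have h2 := hzero
    rw [rangeSplit', Finset.sum_insert (by simp)] at h2
    linear_combination h2
  have hnorm : ‖f 0‖ ≤ ∑ k ∈ Finset.Icc 1 S, ‖p.coeff k‖ * ‖f k‖ := by
    calc ‖f 0‖ = ‖p.coeff 0 * f 0‖ := by rw [norm_mul, hc0, one_mul]
      _ = ‖∑ k ∈ Finset.Icc 1 S, p.coeff k * f k‖ := by rw [hsplit, norm_neg]
      _ ≤ ∑ k ∈ Finset.Icc 1 S, ‖p.coeff k * f k‖ := norm_sum_le _ _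
      _ = ∑ k ∈ Finset.Icc 1 S, ‖p.coeff k‖ * ‖f k‖ := by simp [norm_mul]
  have hCS : (∑ k ∈ Finset.Icc 1 S, ‖p.coeff k‖ * ‖f k‖) ^ 2
      ≤ (∑ k ∈ Finset.Icc 1 S, ‖p.coeff k‖ ^ 2) * ∑ k ∈ Finset.Icc 1 S, ‖f k‖ ^ 2 :=
    Finset.sum_mul_sq_le_sq_mul_sq _ _ _
  have hW : (∑ k ∈ Finset.Icc 1 S, ‖p.coeff k‖ ^ 2) ≤ (4:ℝ) ^ S - 1 := by
    have h1 : ∀ k ∈ Finset.Icc 1 S, ‖p.coeff k‖ ^ 2 ≤ ((S.choose k : ℝ)) ^ 2 := by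
      intro k hk
      rw [Finset.mem_Icc] at hk
      exact pow_le_pow_left₀ (norm_nonneg _) (coeffBound' u hu hk.2) 2
    calc (∑ k ∈ Finset.Icc 1 S, ‖p.coeff k‖ ^ 2)
        ≤ ∑ k ∈ Finset.Icc 1 S, ((S.choose k : ℝ)) ^ 2 := Finset.sum_le_sum h1
      _ = (∑ k ∈ Finset.range (S+1), ((S.choose k : ℝ)) ^ 2) - 1 := by
          rw [rangeSplit', Finset.sum_insert (by simp)]; simp
      _ ≤ (∑ k ∈ Finset.range (S+1), ((S.choose k : ℝ))) ^ 2 - 1 := by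
          have := Finset.sum_sq_le_sq_sum_of_nonneg
            (s := Finset.range (S+1)) (f := fun k => ((S.choose k : ℝ)))
            (fun i _ => by positivity)
          linarith
      _ = (4:ℝ) ^ S - 1 := by
          rw [← Nat.cast_sum, Nat.sum_range_choose]
          push_cast
          rw [← pow_mul, mul_comm, pow_mul]
          norm_num
  have hB : (0:ℝ) ≤ ∑ k ∈ Finset.Icc 1 S, ‖f k‖ ^ 2 :=
    Finset.sum_nonneg fun _ _ => sq_nonneg _
  calc ‖f 0‖ ^ 2 ≤ (∑ k ∈ Finset.Icc 1 S, ‖p.coeff k‖ * ‖f k‖) ^ 2 :=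
        pow_le_pow_left₀ (norm_nonneg _) hnorm 2
    _ ≤ (∑ k ∈ Finset.Icc 1 S, ‖p.coeff k‖ ^ 2) * ∑ k ∈ Finset.Icc 1 S, ‖f k‖ ^ 2 := hCS
    _ ≤ ((4:ℝ) ^ S - 1) * ∑ k ∈ Finset.Icc 1 S, ‖f k‖ ^ 2 := mul_le_mul_of_nonneg_right hW hB

lemma mainBound' (S L : ℕ) (hLS : S ≤ L) (u c : Fin S → ℂ) (hu : ∀ j, ‖u j‖ = 1)
    (hT : ∑ k ∈ Finset.range (L + 1), ‖∑ j, c j * u j ^ k‖ ^ 2 = 1) :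
    ‖∑ j, c j * u j ^ 0‖ ^ 2 ≤ 1 - ((4:ℝ) ^ S)⁻¹ := by
  have h1 := keyIneq' S u c hu
  have h2 : ‖∑ j, c j * u j ^ 0‖ ^ 2 + ∑ k ∈ Finset.Icc 1 S, ‖∑ j, c j * u j ^ k‖ ^ 2 ≤ 1 := by
    rw [← hT]
    have hsub : insert 0 (Finset.Icc 1 S) ⊆ Finset.range (L + 1) := by
      intro x hx
      simp only [Finset.mem_insert, Finset.mem_Icc] at hx
      simp only [Finset.mem_range]
      omega
    calc ‖∑ j, c j * u j ^ 0‖ ^ 2 + ∑ k ∈ Finset.Icc 1 S, ‖∑ j, c j * u j ^ k‖ ^ 2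
        = ∑ k ∈ insert 0 (Finset.Icc 1 S), ‖∑ j, c j * u j ^ k‖ ^ 2 := by
          rw [Finset.sum_insert (by simp)]
      _ ≤ _ := Finset.sum_le_sum_of_subset_of_nonneg hsub fun _ _ _ => sq_nonneg _
  have h4 : (0:ℝ) < 4 ^ S := by positivity
  have h5 : (1:ℝ) ≤ 4 ^ S := one_le_pow₀ (by norm_num)
  have h6 : ((4:ℝ) ^ S) * ((4:ℝ) ^ S)⁻¹ = 1 := mul_inv_cancel₀ (ne_of_gt h4)
  have h7 : ((4:ℝ) ^ S - 1) * (‖∑ j, c j * u j ^ 0‖ ^ 2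
      + ∑ k ∈ Finset.Icc 1 S, ‖∑ j, c j * u j ^ k‖ ^ 2) ≤ ((4:ℝ) ^ S - 1) * 1 :=
    mul_le_mul_of_nonneg_left h2 (by linarith)
  have h8 : ‖∑ j, c j * u j ^ 0‖ ^ 2 * (4 ^ S) ≤ (4:ℝ) ^ S - 1 := by nlinarith [h1, h7]
  have h9 : ‖∑ j, c j * u j ^ 0‖ ^ 2 ≤ ((4:ℝ) ^ S - 1) * ((4:ℝ) ^ S)⁻¹ := by
    rw [← div_eq_mul_inv]
    exact (le_div_iff₀ h4).mpr h8
  have h10 : ((4:ℝ) ^ S - 1) * ((4:ℝ) ^ S)⁻¹ = 1 - ((4:ℝ) ^ S)⁻¹ := by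
    rw [sub_mul, one_mul]
    rw [h6]
  linarith

lemma sigmaMin_sq_ge {m n : ℕ} (A : Matrix (Fin m) (Fin n) ℂ) (b : ℝ) (hb : 0 ≤ b)
    (hn : 0 < n)
    (h : ∀ v : Fin n → ℂ, (∑ j, ‖v j‖ ^ 2) = 1 → b ≤ ∑ i, ‖A.mulVec v i‖ ^ 2) :
    b ≤ sigmaMin A ^ 2 := by
  have hne : {r : ℝ | ∃ v : Fin n → ℂ, (∑ j, ‖v j‖ ^ 2) = 1 ∧
      r = Real.sqrt (∑ i, ‖A.mulVec v i‖ ^ 2)}.Nonempty := by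
    refine ⟨_, Pi.single ⟨0, hn⟩ 1, ?_, rfl⟩
    rw [Finset.sum_eq_single ⟨0, hn⟩]
    · simp
    · intro j _ hj; rw [Pi.single_eq_of_ne hj]; simp
    · simp
  have hlb : Real.sqrt b ≤ sigmaMin A := by
    refine le_csInf hne ?_
    rintro r ⟨v, hv, rfl⟩
    exact Real.sqrt_le_sqrt (h v hv)
  calc b = Real.sqrt b ^ 2 := (Real.sq_sqrt hb).symm
    _ ≤ sigmaMin A ^ 2 := pow_le_pow_left₀ (Real.sqrt_nonneg _) hlb 2

lemma sum_norm_mulVec_orth {m n : ℕ} (U : Matrix (Fin m) (Fin n) ℂ)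
    (hU : Uᴴ * U = 1) (v : Fin n → ℂ) :
    ∑ k, ‖U.mulVec v k‖ ^ 2 = ∑ j, ‖v j‖ ^ 2 := by
  have key : ∀ {p : ℕ} (w : Fin p → ℂ), ∑ k, ‖w k‖ ^ 2 = (star w ⬝ᵥ w).re := by
    intro p w
    rw [dotProduct, Complex.re_sum]
    refine Finset.sum_congr rfl fun k _ => ?_
    simp [Pi.star_apply, ← Complex.normSq_eq_norm_sq, Complex.normSq_apply, Complex.mul_re]
  rw [key (U.mulVec v), key v]
  congr 1
  rw [Matrix.star_mulVec, Matrix.dotProduct_mulVec, Matrix.vecMul_vecMul, hU,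
    Matrix.vecMul_one]

end Aux

/-- with `Φ_L` the `(L+1)×S` Vandermonde matrix with nodes `e^{-2πiω_j}`,
`U` an orthonormal basis matrix for its column space and `U₀`, `U₁` the submatrices of
the first resp. last `L` rows of `U`, one has `min(σ_S(U₀)², σ_S(U₁)²) ≥ 4^{-S}`. -/
theorem sigmaMin_U0_U1_uncertainty_bound
    (L S : ℕ) (hS : 1 < S) (hLS : S ≤ L)
    (ω : Fin S → ℝ) (hω : ∀ j, ω j ∈ Set.Ico (0 : ℝ) 1)
    (hinj : Function.Injective ω)
    (Φ : Matrix (Fin (L + 1)) (Fin S) ℂ)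
    (hΦ : ∀ (k : Fin (L + 1)) (j : Fin S),
      Φ k j = Complex.exp (-(2 * Real.pi * Complex.I) * (k : ℕ) * (ω j)))
    (U : Matrix (Fin (L + 1)) (Fin S) ℂ)
    (hUorth : Uᴴ * U = 1)
    (hrange : LinearMap.range U.mulVecLin = LinearMap.range Φ.mulVecLin)
    (U₀ U₁ : Matrix (Fin L) (Fin S) ℂ)
    (hU₀ : U₀ = U.submatrix Fin.castSucc id)
    (hU₁ : U₁ = U.submatrix Fin.succ id) :
    ((4 : ℝ) ^ S)⁻¹ ≤ min ((sigmaMin U₀) ^ 2) ((sigmaMin U₁) ^ 2) := by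
  set u : Fin S → ℂ := fun j => Complex.exp (-(2 * Real.pi * Complex.I) * (ω j)) with hudef
  have hu : ∀ j, ‖u j‖ = 1 := by
    intro j
    rw [hudef]
    rw [Complex.norm_exp]
    norm_num [Complex.mul_re]
  have hΦu : ∀ (k : Fin (L + 1)) (j : Fin S), Φ k j = u j ^ (k : ℕ) := by
    intro k j
    rw [hΦ, hudef, ← Complex.exp_nat_mul]
    congr 1
    ring
  have hb : (0:ℝ) ≤ ((4:ℝ) ^ S)⁻¹ := by positivity
  have hn : 0 < S := by omega
  -- common preprocessing for a unit vector v
  have main : ∀ v : Fin S → ℂ, (∑ j, ‖v j‖ ^ 2) = 1 →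
      ∃ c : Fin S → ℂ,
        (∀ k : Fin (L + 1), U.mulVec v k = ∑ j, c j * u j ^ (k : ℕ)) ∧
        (∑ k ∈ Finset.range (L + 1), ‖∑ j, c j * u j ^ k‖ ^ 2) = 1 := by
    intro v hv
    have hw : U.mulVec v ∈ LinearMap.range Φ.mulVecLin := by
      rw [← hrange]
      exact ⟨v, rfl⟩
    obtain ⟨c, hc⟩ := hw
    rw [Matrix.mulVecLin_apply] at hc
    have hck : ∀ k : Fin (L + 1), U.mulVec v k = ∑ j, c j * u j ^ (k : ℕ) := by
      intro k
      rw [← hc]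
      simp only [Matrix.mulVec, dotProduct]
      refine Finset.sum_congr rfl fun j _ => ?_
      simp only [hΦu k j]; ring
    refine ⟨c, hck, ?_⟩
    have htot : ∑ k, ‖U.mulVec v k‖ ^ 2 = 1 := by
      rw [sum_norm_mulVec_orth U hUorth v, hv]
    rw [Finset.sum_range fun k => ‖∑ j, c j * u j ^ k‖ ^ 2]
    rw [← htot]
    refine Finset.sum_congr rfl fun k _ => ?_
    rw [hck k]
  rw [le_min_iff]
  constructor
  · -- U₀ : first L rows, need bound on ‖f L‖²
    refine sigmaMin_sq_ge _ _ hb hn ?_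
    intro v hv
    obtain ⟨c, hck, hT⟩ := main v hv
    have hsub : ∀ i : Fin L, U₀.mulVec v i = U.mulVec v (Fin.castSucc i) := by
      intro i; rw [hU₀]; rfl
    have hsum : ∑ i, ‖U₀.mulVec v i‖ ^ 2
        = (∑ k, ‖U.mulVec v k‖ ^ 2) - ‖U.mulVec v (Fin.last L)‖ ^ 2 := by
      rw [Fin.sum_univ_castSucc (f := fun k => ‖U.mulVec v k‖ ^ 2)]
      simp only [hsub]
      ring
    have htot : ∑ k, ‖U.mulVec v k‖ ^ 2 = 1 := by
      rw [sum_norm_mulVec_orth U hUorth v, hv]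
    -- reversed sequence
    set c' : Fin S → ℂ := fun j => c j * u j ^ L with hc'def
    set u' : Fin S → ℂ := fun j => (u j)⁻¹ with hu'def
    have hu' : ∀ j, ‖u' j‖ = 1 := by
      intro j; rw [hu'def]; simp [norm_inv, hu j]
    have hg : ∀ k, k ≤ L → (∑ j, c' j * u' j ^ k) = ∑ j, c j * u j ^ (L - k) := by
      intro k hk
      refine Finset.sum_congr rfl fun j _ => ?_
      have hne : u j ≠ 0 := Complex.exp_ne_zero _
      have hpow : u j ^ L = u j ^ (L - k) * u j ^ k := by
        rw [← pow_add, Nat.sub_add_cancel hk]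
      rw [hc'def, hu'def]
      simp only
      rw [inv_pow, hpow]
      field_simp
    have hT' : ∑ k ∈ Finset.range (L + 1), ‖∑ j, c' j * u' j ^ k‖ ^ 2 = 1 := by
      have e1 : ∑ k ∈ Finset.range (L + 1), ‖∑ j, c' j * u' j ^ k‖ ^ 2
          = ∑ k ∈ Finset.range (L + 1), ‖∑ j, c j * u j ^ (L - k)‖ ^ 2 := by
        refine Finset.sum_congr rfl fun k hk => ?_
        rw [hg k (by simpa [Nat.lt_succ_iff] using hk)]
      rw [e1, ← hT]
      have := Finset.sum_range_reflect (fun k => ‖∑ j, c j * u j ^ k‖ ^ 2) (L + 1)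
      simpa using this
    have hbound := mainBound' S L hLS u' c' hu' hT'
    have hf0 : (∑ j, c' j * u' j ^ 0) = ∑ j, c j * u j ^ L := by
      have := hg 0 (Nat.zero_le L)
      simpa using this
    have hlast : U.mulVec v (Fin.last L) = ∑ j, c j * u j ^ L := by
      have := hck (Fin.last L)
      simpa [Fin.val_last] using this
    rw [hsum, htot]
    rw [hlast]
    rw [hf0] at hbound
    linarith
  · -- U₁ : last L rows, need bound on ‖f 0‖²
    refine sigmaMin_sq_ge _ _ hb hn ?_
    intro v hv
    obtain ⟨c, hck, hT⟩ := main v hv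
    have hsub : ∀ i : Fin L, U₁.mulVec v i = U.mulVec v (Fin.succ i) := by
      intro i; rw [hU₁]; rfl
    have hsum : ∑ i, ‖U₁.mulVec v i‖ ^ 2
        = (∑ k, ‖U.mulVec v k‖ ^ 2) - ‖U.mulVec v 0‖ ^ 2 := by
      rw [Fin.sum_univ_succ (f := fun k => ‖U.mulVec v k‖ ^ 2)]
      simp only [hsub]
      ring
    have htot : ∑ k, ‖U.mulVec v k‖ ^ 2 = 1 := by
      rw [sum_norm_mulVec_orth U hUorth v, hv]
    have hbound := mainBound' S L hLS u c hu hT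
    have h0 : U.mulVec v 0 = ∑ j, c j * u j ^ 0 := by
      have := hck 0
      simpa using this
    rw [hsum, htot, h0]
    linarith
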